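/- Assume that for every δ ≥ 0 and every data y^δ with ‖y − y^δ‖ ≤ δ the functional Φ^δ is convex on B_{6ρ}(x₀) and ∇Φ^δ is Lipschitz continuous with the uniform constant L on B_{6ρ}(x₀). Let τ > 1 and define the stopping index k* = k*(δ, y^δ) by the discrepancy principle: k* is the smallest integer k ≥ 0 with ‖F(x_k^δ) − y^δ‖ ≤ τδ. Let S := { x ∈ B_{2ρ}(x₀) : F(x) = y }. Then: (i) k* is finite for every δ > 0 and k* = O(δ⁻¹) as δ → 0; (ii) for every sequence δ_n > 0 with δ_n → 0 and data y_n with ‖y − y_n‖ ≤ δ_n there exist x̃ ∈ S and a subsequence of (x_{k*(δ_n, y_n)}^{δ_n}) converging weakly to x̃; (iii) if S is a singleton {x̃}, the whole sequence (x_{k*(δ_n, y_n)}^{δ_n}) converges weakly to x̃. -/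

import Mathlib

open Metric Filter
open scoped RealInnerProductSpace Topology


section AuxWeak
variable {X : Type*} [NormedAddCommGroup X] [InnerProductSpace ℝ X] [CompleteSpace X]

theorem exists_weak_subseq {X : Type*} [NormedAddCommGroup X] [InnerProductSpace ℝ X]
    [CompleteSpace X] (u : ℕ → X) (R : ℝ) (hu : ∀ n, ‖u n‖ ≤ R) :
    ∃ (w : X) (φ : ℕ → ℕ), StrictMono φ ∧
      ∀ h : X, Tendsto (fun n => ⟪u (φ n), h⟫) atTop (nhds ⟪w, h⟫) := by
  have hR : 0 ≤ R := le_trans (norm_nonneg _) (hu 0)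
  -- diagonal extraction via compactness of the Hilbert cube
  have hcomp : IsCompact (Set.univ.pi fun _ : ℕ => Set.Icc (-(R*R)) (R*R)) :=
    isCompact_univ_pi fun _ => isCompact_Icc
  have hmem : ∀ n, (fun j => ⟪u n, u j⟫) ∈ (Set.univ.pi fun _ : ℕ => Set.Icc (-(R*R)) (R*R)) := by
    intro n j _
    have h1 : |⟪u n, u j⟫| ≤ ‖u n‖ * ‖u j‖ := abs_real_inner_le_norm _ _
    have h2 : ‖u n‖ * ‖u j‖ ≤ R * R :=
      mul_le_mul (hu n) (hu j) (norm_nonneg _) hR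
    have := abs_le.mp (h1.trans h2)
    exact ⟨this.1, this.2⟩
  obtain ⟨g, -, φ, hφ, hconv⟩ := hcomp.tendsto_subseq hmem
  have hconv' : ∀ j : ℕ, Tendsto (fun n => ⟪u (φ n), u j⟫) atTop (𝓝 (g j)) := by
    intro j
    exact (tendsto_pi_nhds.mp hconv) j
  -- the set of h where weak convergence holds
  set C : Set X := {h : X | ∃ c : ℝ, Tendsto (fun n => ⟪u (φ n), h⟫) atTop (𝓝 c)} with hC
  have hCu : ∀ j, u j ∈ C := fun j => ⟨g j, hconv' j⟩
  have hCadd : ∀ a ∈ C, ∀ b ∈ C, a + b ∈ C := by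
    rintro a ⟨ca, hca⟩ b ⟨cb, hcb⟩
    exact ⟨ca + cb, by simpa [inner_add_right] using hca.add hcb⟩
  have hCsmul : ∀ (r : ℝ), ∀ a ∈ C, r • a ∈ C := by
    rintro r a ⟨ca, hca⟩
    exact ⟨r * ca, by simpa [real_inner_smul_right] using hca.const_mul r⟩
  have hCzero : (0 : X) ∈ C := ⟨0, by simpa using tendsto_const_nhds⟩
  -- C is closed
  have hCclosed : IsClosed C := by
    refine isClosed_of_closure_subset ?_
    intro h hh
    have hcauchy : CauchySeq (fun n => ⟪u (φ n), h⟫) := by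
      rw [Metric.cauchySeq_iff]
      intro ε hε
      obtain ⟨h', hh'C, hh'⟩ : ∃ h' ∈ C, ‖h - h'‖ < ε / (3 * (R + 1)) := by
        have : ∃ h' ∈ C, dist h h' < ε / (3 * (R + 1)) :=
          Metric.mem_closure_iff.mp hh _ (by positivity)
        simpa [dist_eq_norm] using this
      obtain ⟨c', hc'⟩ := hh'C
      have hc'cauchy : CauchySeq (fun n => ⟪u (φ n), h'⟫) := hc'.cauchySeq
      rw [Metric.cauchySeq_iff] at hc'cauchy
      obtain ⟨N, hN⟩ := hc'cauchy (ε / 3) (by positivity)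
      refine ⟨N, fun m hm n hn => ?_⟩
      have key : ∀ k, |⟪u (φ k), h⟫ - ⟪u (φ k), h'⟫| ≤ R * ‖h - h'‖ := by
        intro k
        rw [← inner_sub_right]
        exact (abs_real_inner_le_norm _ _).trans
          (mul_le_mul_of_nonneg_right (hu _) (norm_nonneg _))
      have hRh : R * ‖h - h'‖ < ε / 3 := by
        rcases eq_or_lt_of_le (norm_nonneg (h - h')) with h0 | h0
        · rw [← h0, mul_zero]; positivity
        · calc R * ‖h - h'‖ ≤ (R + 1) * ‖h - h'‖ := by nlinarith
            _ < (R + 1) * (ε / (3 * (R + 1))) := by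
                apply mul_lt_mul_of_pos_left hh' (by positivity)
            _ = ε / 3 := by field_simp
      have := hN m hm n hn
      rw [Real.dist_eq] at this ⊢
      calc |⟪u (φ m), h⟫ - ⟪u (φ n), h⟫|
          ≤ |⟪u (φ m), h⟫ - ⟪u (φ m), h'⟫| + |⟪u (φ m), h'⟫ - ⟪u (φ n), h'⟫|
            + |⟪u (φ n), h'⟫ - ⟪u (φ n), h⟫| := by
              have := abs_sub_le (⟪u (φ m), h⟫) (⟪u (φ m), h'⟫) (⟪u (φ n), h⟫)
              have h2 := abs_sub_le (⟪u (φ m), h'⟫) (⟪u (φ n), h'⟫) (⟪u (φ n), h⟫)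
              linarith
        _ < ε / 3 + ε / 3 + ε / 3 := by
            refine add_lt_add (add_lt_add ((key m).trans_lt hRh) this) ?_
            have : |⟪u (φ n), h'⟫ - ⟪u (φ n), h⟫| = |⟪u (φ n), h⟫ - ⟪u (φ n), h'⟫| :=
              abs_sub_comm _ _
            rw [this]; exact (key n).trans_lt hRh
        _ = ε := by ring
    obtain ⟨c, hc⟩ := cauchySeq_tendsto_of_complete hcauchy
    exact ⟨c, hc⟩
  -- C is all of X
  have hCall : ∀ h : X, h ∈ C := by
    set CS : Submodule ℝ X :=
      { carrier := C
        add_mem' := fun ha hb => hCadd _ ha _ hb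
        zero_mem' := hCzero
        smul_mem' := fun r a ha => hCsmul r a ha } with hCS
    set M : Submodule ℝ X := (Submodule.span ℝ (Set.range u)).topologicalClosure with hM
    haveI : CompleteSpace M := (Submodule.isClosed_topologicalClosure _).completeSpace_coe
    have hMC : M ≤ CS := by
      apply Submodule.topologicalClosure_minimal
      · rw [Submodule.span_le]
        rintro _ ⟨j, rfl⟩
        exact hCu j
      · exact hCclosed
    have hMoC : Mᗮ ≤ CS := by
      intro h hh
      refine ⟨0, ?_⟩
      have : ∀ n, ⟪u (φ n), h⟫ = 0 := by
        intro n
        exact (Submodule.mem_orthogonal M h).mp hh _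
          (Submodule.le_topologicalClosure _ (Submodule.subset_span ⟨φ n, rfl⟩))
      simpa [this] using tendsto_const_nhds (α := ℝ) (f := atTop)
    intro h
    have : h ∈ M ⊔ Mᗮ := by
      rw [Submodule.sup_orthogonal_of_hasOrthogonalProjection]
      trivial
    obtain ⟨a, ha, b, hb, rfl⟩ := Submodule.mem_sup.mp this
    exact hCadd _ (hMC ha) _ (hMoC hb)
  -- build the limit functional
  choose c hc using hCall
  have hmap_add : ∀ a b, c (a + b) = c a + c b := by
    intro a b
    exact tendsto_nhds_unique (hc (a + b))
      (by simpa [inner_add_right] using (hc a).add (hc b))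
  have hmap_smul : ∀ (r : ℝ) (a), c (r • a) = r * c a := by
    intro r a
    exact tendsto_nhds_unique (hc (r • a))
      (by simpa [real_inner_smul_right] using (hc a).const_mul r)
  have hbound : ∀ a, ‖c a‖ ≤ R * ‖a‖ := by
    intro a
    have : ∀ n, |⟪u (φ n), a⟫| ≤ R * ‖a‖ := fun n =>
      (abs_real_inner_le_norm _ _).trans
        (mul_le_mul_of_nonneg_right (hu _) (norm_nonneg _))
    have h1 : Tendsto (fun n => |⟪u (φ n), a⟫|) atTop (𝓝 |c a|) := (hc a).abs
    simpa [Real.norm_eq_abs] using le_of_tendsto h1 (Eventually.of_forall this)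
  set fL : X →L[ℝ] ℝ := LinearMap.mkContinuous
    { toFun := c, map_add' := hmap_add, map_smul' := hmap_smul } R hbound with hfL
  refine ⟨(InnerProductSpace.toDual ℝ X).symm fL, φ, hφ, fun h => ?_⟩
  have : ⟪(InnerProductSpace.toDual ℝ X).symm fL, h⟫ = fL h :=
    InnerProductSpace.toDual_symm_apply
  rw [this]
  exact hc h

end AuxWeak

section AuxPieces
variable {X Y : Type*} [NormedAddCommGroup X] [InnerProductSpace ℝ X] [CompleteSpace X]
    [NormedAddCommGroup Y] [InnerProductSpace ℝ Y] [CompleteSpace Y]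

/-- The uniform Lipschitz hypothesis over all data forces the adjoint (hence the derivative)
to be constant on the ball. -/
theorem deriv_const_of_lip (F : X → Y) (F' : X → X →L[ℝ] Y) (y : Y) (L : ℝ) (s : Set X)
    (hLipδ : ∀ δ : ℝ, 0 ≤ δ → ∀ yδ : Y, ‖y - yδ‖ ≤ δ →
      ∀ u ∈ s, ∀ v ∈ s,
        ‖(ContinuousLinearMap.adjoint (F' u)) (F u - yδ) -
          (ContinuousLinearMap.adjoint (F' v)) (F v - yδ)‖ ≤ L * ‖u - v‖)
    {u v : X} (hu : u ∈ s) (hv : v ∈ s) : F' u = F' v := by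
  set A : X → Y →L[ℝ] X := fun x => ContinuousLinearMap.adjoint (F' x) with hA
  have key : ∀ w : Y, A u (F u - (y - w)) - A v (F v - (y - w)) =
      (A u (F u - y) - A v (F v - y)) + (A u w - A v w) := by
    intro w; simp only [sub_sub_eq_add_sub, map_sub, map_add]; abel
  have hbound : ∀ w : Y, ‖(A u (F u - y) - A v (F v - y)) + (A u w - A v w)‖ ≤ L * ‖u - v‖ := by
    intro w
    rw [← key w]
    exact hLipδ ‖w‖ (norm_nonneg w) (y - w) (by simp) u hu v hv
  have hzero : ∀ w : Y, A u w - A v w = 0 := by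
    intro w
    by_contra hne
    have hpos : 0 < ‖A u w - A v w‖ := norm_pos_iff.mpr hne
    set c := A u (F u - y) - A v (F v - y)
    have hLnn : 0 ≤ L * ‖u - v‖ := le_trans (norm_nonneg _) (by simpa using hbound 0)
    set t : ℝ := (L * ‖u - v‖ + ‖c‖ + 1) / ‖A u w - A v w‖ with ht
    have htpos : 0 < t := div_pos (by positivity) hpos
    have h1 := hbound (t • w)
    have h2 : A u (t • w) - A v (t • w) = t • (A u w - A v w) := by
      rw [map_smul, map_smul, smul_sub]
    rw [h2] at h1
    have h3 : ‖t • (A u w - A v w)‖ - ‖c‖ ≤ ‖c + t • (A u w - A v w)‖ := by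
      have := norm_add_le (c + t • (A u w - A v w)) (-c)
      simp only [add_neg_cancel_comm, norm_neg] at this
      linarith
    have h4 : ‖t • (A u w - A v w)‖ = t * ‖A u w - A v w‖ := by
      rw [norm_smul, Real.norm_eq_abs, abs_of_pos htpos]
    have h5 : t * ‖A u w - A v w‖ = L * ‖u - v‖ + ‖c‖ + 1 := by
      rw [ht]; field_simp
    nlinarith
  have hAeq : A u = A v := by
    ext w
    have := hzero w
    rwa [sub_eq_zero] at this
  have hadj : ContinuousLinearMap.adjoint (A u) = ContinuousLinearMap.adjoint (A v) :=
    congrArg _ hAeq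
  rw [hA] at hadj
  simpa [ContinuousLinearMap.adjoint_adjoint] using hadj

/-- `F` is affine on the convex set where its derivative is constant. -/
theorem affine_of_deriv_const (F : X → Y) (F' : X → X →L[ℝ] Y) (s : Set X) (hs : Convex ℝ s)
    (hF : ∀ u ∈ s, HasFDerivAt F (F' u) u)
    (T : X →L[ℝ] Y) (hT : ∀ u ∈ s, F' u = T)
    {a b : X} (ha : a ∈ s) (hb : b ∈ s) : F b - F a = T (b - a) := by
  have h0 : ∀ u ∈ s, HasFDerivWithinAt (fun x => F x - T x) ((0 : X →L[ℝ] Y)) s u := by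
    intro u hu
    have h1 : HasFDerivAt (fun x => F x - T x) (F' u - T) u := (hF u hu).sub (T.hasFDerivAt)
    rw [hT u hu, sub_self] at h1
    exact h1.hasFDerivWithinAt
  have hmv := hs.norm_image_sub_le_of_norm_hasFDerivWithin_le (C := 0) h0
    (fun x _ => by simp) ha hb
  rw [zero_mul, norm_le_zero_iff] at hmv
  have h3 : F b - F a - (T b - T a) = F b - T b - (F a - T a) := by abel
  rw [map_sub]
  exact sub_eq_zero.mp (h3.trans hmv)

/-- Gradient of `Φ`. -/
theorem hasGradient_phi (F : X → Y) (F' : X → X →L[ℝ] Y) (yδ : Y) (s : Set X)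
    (hF : ∀ u ∈ s, HasFDerivAt F (F' u) u) {u : X} (hu : u ∈ s) :
    HasFDerivAt (fun x => (1 / 2 : ℝ) * ‖F x - yδ‖ ^ 2)
      (innerSL ℝ ((ContinuousLinearMap.adjoint (F' u)) (F u - yδ))) u := by
  have h1 : HasFDerivAt (fun x => F x - yδ) (F' u) u := (hF u hu).sub_const yδ
  have h2 := (h1.inner (𝕜 := ℝ) h1).const_mul (1/2 : ℝ)
  have heq : (fun x => (1 / 2 : ℝ) * ‖F x - yδ‖ ^ 2)
      = fun x => (1/2 : ℝ) * ⟪F x - yδ, F x - yδ⟫ := by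
    funext x
    rw [real_inner_self_eq_norm_sq]
  rw [heq]
  refine h2.congr_fderiv ?_
  ext h
  simp only [innerSL_apply_apply, ContinuousLinearMap.smul_apply, ContinuousLinearMap.comp_apply,
    ContinuousLinearMap.prod_apply, fderivInnerCLM_apply, smul_eq_mul]
  rw [ContinuousLinearMap.adjoint_inner_left]
  rw [real_inner_comm (F u - yδ) (F' u h)]
  ring


end AuxPieces

section AuxToolkit
variable {X : Type*} [NormedAddCommGroup X] [InnerProductSpace ℝ X]

/-- directional derivative along a segment -/
theorem hasDerivAt_along {Φ : X → ℝ} {G : X → X} {s : Set X}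
    (hG : ∀ u ∈ s, HasFDerivAt Φ (innerSL ℝ (G u)) u)
    {a d : X} {t : ℝ} (ht : a + t • d ∈ s) :
    HasDerivAt (fun r : ℝ => Φ (a + r • d)) ⟪G (a + t • d), d⟫ t := by
  have hl : HasDerivAt (fun r : ℝ => a + r • d) d t := by
    simpa using ((hasDerivAt_id t).smul_const d).const_add a
  have := (hG _ ht).comp_hasDerivAt t hl
  exact this

/-- Descent lemma. -/
theorem descent_lemma {Φ : X → ℝ} {G : X → X} {s : Set X} (hs : Convex ℝ s) {L : ℝ}
    (hG : ∀ u ∈ s, HasFDerivAt Φ (innerSL ℝ (G u)) u)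
    (hLip : ∀ u ∈ s, ∀ v ∈ s, ‖G u - G v‖ ≤ L * ‖u - v‖)
    {a b : X} (ha : a ∈ s) (hb : b ∈ s) :
    Φ b ≤ Φ a + ⟪G a, b - a⟫ + L / 2 * ‖b - a‖ ^ 2 := by
  set d := b - a with hd
  have hline : ∀ t ∈ Set.Icc (0:ℝ) 1, a + t • d ∈ s := fun t ht =>
    hs.add_smul_sub_mem ha hb ht
  set ψ : ℝ → ℝ := fun t => Φ (a + t • d) - ⟪G a, d⟫ * t - L * ‖d‖ ^ 2 / 2 * t ^ 2 with hψ
  have hψD : ∀ t ∈ Set.Icc (0:ℝ) 1,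
      HasDerivAt ψ (⟪G (a + t • d), d⟫ - ⟪G a, d⟫ - L * ‖d‖ ^ 2 * t) t := by
    intro t ht
    have h1 := hasDerivAt_along hG (hline t ht)
    have h2 : HasDerivAt (fun r : ℝ => ⟪G a, d⟫ * r) ⟪G a, d⟫ t := by
      simpa using (hasDerivAt_id t).const_mul ⟪G a, d⟫
    have h3 : HasDerivAt (fun r : ℝ => L * ‖d‖ ^ 2 / 2 * r ^ 2) (L * ‖d‖ ^ 2 * t) t := by
      have := (hasDerivAt_pow 2 t).const_mul (L * ‖d‖ ^ 2 / 2)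
      refine this.congr_deriv ?_
      ring
    exact (h1.sub h2).sub h3
  have hcont : ContinuousOn ψ (Set.Icc 0 1) := fun t ht =>
    (hψD t ht).continuousAt.continuousWithinAt
  have hanti : AntitoneOn ψ (Set.Icc 0 1) := by
    apply antitoneOn_of_deriv_nonpos (convex_Icc 0 1) hcont
    · intro t ht
      rw [interior_Icc] at ht
      exact (hψD t (Set.mem_Icc_of_Ioo ht)).differentiableAt.differentiableWithinAt
    · intro t ht
      rw [interior_Icc] at ht
      rw [(hψD t (Set.mem_Icc_of_Ioo ht)).deriv]
      have hub : ⟪G (a + t • d) - G a, d⟫ ≤ L * t * ‖d‖ ^ 2 := by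
        calc ⟪G (a + t • d) - G a, d⟫ ≤ ‖G (a + t • d) - G a‖ * ‖d‖ := real_inner_le_norm _ _
          _ ≤ (L * ‖a + t • d - a‖) * ‖d‖ := by
              apply mul_le_mul_of_nonneg_right _ (norm_nonneg _)
              exact hLip _ (hline t (Set.mem_Icc_of_Ioo ht)) a ha
          _ = L * t * ‖d‖ ^ 2 := by
              rw [add_sub_cancel_left, norm_smul, Real.norm_eq_abs, abs_of_pos ht.1]
              ring
      rw [inner_sub_left] at hub
      have : L * t * ‖d‖ ^ 2 = L * ‖d‖ ^ 2 * t := by ring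
      linarith
  have h01 := hanti (Set.mem_Icc.mpr ⟨le_refl 0, zero_le_one⟩)
    (Set.mem_Icc.mpr ⟨zero_le_one, le_refl 1⟩) zero_le_one
  have hψ0 : ψ 0 = Φ a := by
    show Φ (a + (0:ℝ) • d) - ⟪G a, d⟫ * 0 - L * ‖d‖ ^ 2 / 2 * 0 ^ 2 = Φ a
    norm_num
  have hψ1 : ψ 1 = Φ b - ⟪G a, d⟫ - L * ‖d‖ ^ 2 / 2 := by
    show Φ (a + (1:ℝ) • d) - ⟪G a, d⟫ * 1 - L * ‖d‖ ^ 2 / 2 * 1 ^ 2 = _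
    have hab : a + (1:ℝ) • d = b := by rw [one_smul, hd]; abel
    rw [hab]; ring
  rw [hψ0, hψ1] at h01
  linarith

/-- Gradient inequality for a convex function. -/
theorem convex_grad_ineq {Φ : X → ℝ} {G : X → X} {s : Set X}
    (hconv : ConvexOn ℝ s Φ)
    (hG : ∀ u ∈ s, HasFDerivAt Φ (innerSL ℝ (G u)) u)
    {a b : X} (ha : a ∈ s) (hb : b ∈ s) :
    Φ a + ⟪G a, b - a⟫ ≤ Φ b := by
  set d := b - a with hd
  set g : ℝ → ℝ := fun t => Φ (a + t • d) with hg
  have hgt : ∀ t : ℝ, g t = Φ (a + t • d) := fun _ => rfl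
  have hg0 : g 0 = Φ a := by rw [hgt]; norm_num
  have hg1 : g 1 = Φ b := by
    rw [hgt, one_smul, hd]
    congr 1; abel
  have hgd : HasDerivAt g ⟪G a, d⟫ 0 := by
    have := hasDerivAt_along hG (t := (0:ℝ)) (a := a) (d := d) (by simpa using ha)
    simpa using this
  have hcomb : ∀ t ∈ Set.Ioo (0:ℝ) 1, g t ≤ g 0 + t * (g 1 - g 0) := by
    intro t ht
    have hmem : a + t • d = (1 - t) • a + t • b := by
      rw [hd, smul_sub, sub_smul, one_smul]; abel
    have h2 := hconv.2 ha hb (by linarith [ht.2] : (0:ℝ) ≤ 1 - t) (le_of_lt ht.1)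
      (by ring : (1 - t) + t = 1)
    rw [hgt, hg0, hg1, hmem]
    calc Φ ((1-t) • a + t • b) ≤ (1 - t) * Φ a + t * Φ b := h2
      _ = Φ a + t * (Φ b - Φ a) := by ring
  have hslope : Tendsto (slope g 0) (𝓝[>] 0) (𝓝 ⟪G a, d⟫) := by
    have := hasDerivAt_iff_tendsto_slope.mp hgd
    exact this.mono_left (nhdsWithin_mono 0 (fun x hx => ne_of_gt hx))
  have hle : ⟪G a, d⟫ ≤ g 1 - g 0 := by
    refine le_of_tendsto hslope ?_
    filter_upwards [Ioo_mem_nhdsGT_of_mem (Set.mem_Ico.mpr ⟨le_refl 0, zero_lt_one⟩)] with t ht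
    rw [slope_def_field]
    have h3 := hcomb t ht
    rw [div_le_iff₀ (by simpa using ht.1 : (0:ℝ) < t - 0)]
    simp only [sub_zero]
    nlinarith [ht.1]
  rw [hg0, hg1] at hle
  linarith

/-- Variational inequality for the metric projection. -/
theorem proj_vi {s : Set X} (hs : Convex ℝ s) {P : X → X}
    (hP_mem : ∀ u, P u ∈ s) (hP_proj : ∀ u, ∀ v ∈ s, ‖u - P u‖ ≤ ‖u - v‖)
    (w : X) {v : X} (hv : v ∈ s) : ⟪w - P w, v - P w⟫ ≤ 0 := by
  have key : ∀ t ∈ Set.Ioo (0:ℝ) 1, 2 * ⟪w - P w, v - P w⟫ ≤ t * ‖v - P w‖ ^ 2 := by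
    intro t ht
    have hq : P w + t • (v - P w) ∈ s :=
      hs.add_smul_sub_mem (hP_mem w) hv (Set.mem_Icc_of_Ioo ht)
    have h1 := hP_proj w _ hq
    have h2 : w - (P w + t • (v - P w)) = (w - P w) - t • (v - P w) := by abel
    have expand : ‖(w - P w) - t • (v - P w)‖ ^ 2
        = ‖w - P w‖ ^ 2 - 2 * (t * ⟪w - P w, v - P w⟫) + t ^ 2 * ‖v - P w‖ ^ 2 := by
      rw [norm_sub_sq_real, real_inner_smul_right, norm_smul, Real.norm_eq_abs,
        abs_of_pos ht.1, mul_pow]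
    have h3 : ‖w - P w‖ ^ 2 ≤ ‖(w - P w) - t • (v - P w)‖ ^ 2 := by
      rw [← h2]
      exact pow_le_pow_left₀ (norm_nonneg _) h1 2
    rw [expand] at h3
    nlinarith [ht.1, ht.2]
  have htend : Tendsto (fun t : ℝ => t * ‖v - P w‖ ^ 2) (𝓝[>] 0) (𝓝 0) := by
    have h4 : Tendsto (fun t : ℝ => t * ‖v - P w‖ ^ 2) (𝓝 0) (𝓝 0) := by
      have hcm : Continuous (fun t : ℝ => t * ‖v - P w‖ ^ 2) := by continuity
      have := hcm.tendsto (0:ℝ)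
      simpa using this
    exact h4.mono_left nhdsWithin_le_nhds
  have := ge_of_tendsto htend
    (by filter_upwards [Ioo_mem_nhdsGT_of_mem (Set.mem_Ico.mpr ⟨le_refl 0, zero_lt_one⟩)]
        with t ht using key t ht)
  linarith


end AuxToolkit

section AuxMain
variable {X Y : Type*} [NormedAddCommGroup X] [InnerProductSpace ℝ X] [CompleteSpace X]
    [NormedAddCommGroup Y] [InnerProductSpace ℝ Y] [CompleteSpace Y]

/-- one step of projected gradient descent -/
theorem key_step {Φ : X → ℝ} {G : X → X} {s2 s6 : Set X}
    (hs6 : Convex ℝ s6) (hs2 : Convex ℝ s2) (hsub : s2 ⊆ s6)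
    {L ω : ℝ} (hω : 0 < ω) (hωL : ω * L ≤ 1)
    (hconv : ConvexOn ℝ s6 Φ)
    (hG : ∀ u ∈ s6, HasFDerivAt Φ (innerSL ℝ (G u)) u)
    (hLip : ∀ u ∈ s6, ∀ v ∈ s6, ‖G u - G v‖ ≤ L * ‖u - v‖)
    {P : X → X} (hP_mem : ∀ u, P u ∈ s2) (hP_proj : ∀ u, ∀ v ∈ s2, ‖u - P u‖ ≤ ‖u - v‖)
    {z u : X} (hz : z ∈ s6) (hu : u ∈ s2) :
    2 * ω * (Φ (P (z - ω • G z)) - Φ u)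
      ≤ ‖z - u‖ ^ 2 - ‖P (z - ω • G z) - u‖ ^ 2 := by
  set xp := P (z - ω • G z) with hxp
  have hxp2 : xp ∈ s2 := hP_mem _
  have hdesc := descent_lemma hs6 hG hLip hz (hsub hxp2)
  have hcvx := convex_grad_ineq hconv hG hz (hsub hu)
  have hvi := proj_vi hs2 hP_mem hP_proj (z - ω • G z) hu
  have hvi' : ⟪z - xp, u - xp⟫ - ω * ⟪G z, u - xp⟫ ≤ 0 := by
    have he : z - ω • G z - xp = (z - xp) - ω • G z := by abel
    rw [← hxp, he, inner_sub_left, real_inner_smul_left] at hvi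
    linarith
  have hsplit : ⟪G z, xp - z⟫ + ⟪G z, z - u⟫ = ⟪G z, xp - u⟫ := by
    rw [show xp - u = (xp - z) + (z - u) by abel, inner_add_right]
  have hneg1 : ⟪G z, u - xp⟫ = -⟪G z, xp - u⟫ := by
    rw [show u - xp = -(xp - u) by abel, inner_neg_right]
  have hneg2 : ⟪z - xp, u - xp⟫ = -⟪z - xp, xp - u⟫ := by
    rw [show u - xp = -(xp - u) by abel, inner_neg_right]
  have hneg3 : ⟪G z, u - z⟫ = -⟪G z, z - u⟫ := by
    rw [show u - z = -(z - u) by abel, inner_neg_right]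
  have hI1 : ‖z - u‖ ^ 2 = ‖z - xp‖ ^ 2 + 2 * ⟪z - xp, xp - u⟫ + ‖xp - u‖ ^ 2 := by
    rw [show z - u = (z - xp) + (xp - u) by abel]
    exact norm_add_sq_real _ _
  have hnrev : ‖xp - z‖ ^ 2 = ‖z - xp‖ ^ 2 := by rw [norm_sub_rev]
  have hcomb : Φ xp - Φ u ≤ ⟪G z, xp - u⟫ + L / 2 * ‖xp - z‖ ^ 2 := by linarith
  have hmul := mul_le_mul_of_nonneg_left hcomb (by positivity : (0:ℝ) ≤ 2 * ω)
  have hmul' : 2 * ω * (Φ xp - Φ u)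
      ≤ 2 * (ω * ⟪G z, xp - u⟫) + (ω * L) * ‖xp - z‖ ^ 2 := by
    calc 2 * ω * (Φ xp - Φ u) ≤ 2 * ω * (⟪G z, xp - u⟫ + L / 2 * ‖xp - z‖ ^ 2) := hmul
      _ = 2 * (ω * ⟪G z, xp - u⟫) + (ω * L) * ‖xp - z‖ ^ 2 := by ring
  have hvi2 : ω * ⟪G z, xp - u⟫ ≤ ⟪z - xp, xp - u⟫ := by
    rw [hneg1, hneg2] at hvi'
    nlinarith
  have hLbd : (ω * L) * ‖xp - z‖ ^ 2 ≤ ‖xp - z‖ ^ 2 := by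
    have := mul_le_mul_of_nonneg_right hωL (sq_nonneg ‖xp - z‖)
    linarith
  linarith

/-- existence of a minimizer of an affine least-squares functional over a closed ball -/
theorem exists_min_ball (T : X →L[ℝ] Y) (c : Y) (x₀ : X) (r : ℝ) (hr : 0 ≤ r) :
    ∃ m ∈ closedBall x₀ r, ∀ v ∈ closedBall x₀ r,
      ‖T (m - x₀) + c‖ ≤ ‖T (v - x₀) + c‖ := by
  classical
  set Q : X → ℝ := fun v => ‖T (v - x₀) + c‖ with hQ
  set I := sInf (Q '' closedBall x₀ r) with hI
  have hne : (Q '' closedBall x₀ r).Nonempty :=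
    ⟨Q x₀, ⟨x₀, mem_closedBall_self hr, rfl⟩⟩
  have hbdd : BddBelow (Q '' closedBall x₀ r) :=
    ⟨0, fun q ⟨v, _, hv⟩ => hv ▸ norm_nonneg _⟩
  have hInn : 0 ≤ I := le_csInf hne fun q ⟨v, _, hv⟩ => hv ▸ norm_nonneg _
  have hseq : ∀ j : ℕ, ∃ v ∈ closedBall x₀ r, Q v < I + 1 / (j + 1) := by
    intro j
    have : I < I + 1 / (j + 1) := by
      have h0 : (0:ℝ) < 1 / ((j:ℝ) + 1) := by positivity
      linarith
    obtain ⟨q, ⟨v, hv, rfl⟩, hq⟩ := exists_lt_of_csInf_lt hne this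
    exact ⟨v, hv, hq⟩
  choose v hvmem hvlt using hseq
  have hvbd : ∀ j, ‖v j‖ ≤ ‖x₀‖ + r := by
    intro j
    have := mem_closedBall_iff_norm.mp (hvmem j)
    calc ‖v j‖ = ‖x₀ + (v j - x₀)‖ := by rw [add_sub_cancel]
      _ ≤ ‖x₀‖ + ‖v j - x₀‖ := norm_add_le _ _
      _ ≤ ‖x₀‖ + r := by linarith
  obtain ⟨m, φ, hφ, hweak⟩ := exists_weak_subseq v (‖x₀‖ + r) hvbd
  have hQφ : Tendsto (fun j => I + 1 / ((φ j : ℝ) + 1)) atTop (𝓝 I) := by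
    have h1 : Tendsto (fun j : ℕ => ((φ j : ℝ) + 1)) atTop atTop := by
      apply tendsto_atTop_add_const_right
      exact tendsto_natCast_atTop_atTop.comp hφ.tendsto_atTop
    have h2 : Tendsto (fun j : ℕ => 1 / ((φ j : ℝ) + 1)) atTop (𝓝 0) :=
      tendsto_inv_atTop_zero.comp h1 |>.congr (fun j => by rw [Function.comp_apply, one_div])
    simpa using tendsto_const_nhds.add h2
  -- m is in the ball
  have hmball : m ∈ closedBall x₀ r := by
    rw [mem_closedBall_iff_norm]
    have hlim : Tendsto (fun j => ⟪v (φ j) - x₀, m - x₀⟫) atTop (𝓝 (‖m - x₀‖ ^ 2)) := by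
      have := (hweak (m - x₀)).sub_const ⟪x₀, m - x₀⟫
      have heq : ∀ j, ⟪v (φ j), m - x₀⟫ - ⟪x₀, m - x₀⟫ = ⟪v (φ j) - x₀, m - x₀⟫ := by
        intro j; rw [inner_sub_left]
      have heq2 : ⟪m, m - x₀⟫ - ⟪x₀, m - x₀⟫ = ‖m - x₀‖ ^ 2 := by
        rw [← inner_sub_left, real_inner_self_eq_norm_sq]
      rw [heq2] at this
      exact this.congr heq
    have hub : ∀ j, ⟪v (φ j) - x₀, m - x₀⟫ ≤ r * ‖m - x₀‖ := by
      intro j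
      calc ⟪v (φ j) - x₀, m - x₀⟫ ≤ ‖v (φ j) - x₀‖ * ‖m - x₀‖ := real_inner_le_norm _ _
        _ ≤ r * ‖m - x₀‖ := by
            apply mul_le_mul_of_nonneg_right _ (norm_nonneg _)
            exact mem_closedBall_iff_norm.mp (hvmem (φ j))
    have h3 : ‖m - x₀‖ ^ 2 ≤ r * ‖m - x₀‖ :=
      le_of_tendsto hlim (Eventually.of_forall hub)
    rcases eq_or_lt_of_le (norm_nonneg (m - x₀)) with h0 | h0
    · rw [← h0]; exact hr
    · nlinarith
  -- m attains the infimum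
  have hQm : Q m ≤ I := by
    set ξ := T (m - x₀) + c with hξ
    have hlim : Tendsto (fun j => ⟪T (v (φ j) - x₀) + c, ξ⟫) atTop (𝓝 (‖ξ‖ ^ 2)) := by
      have hin : ∀ j, ⟪T (v (φ j) - x₀) + c, ξ⟫
          = ⟪v (φ j), ContinuousLinearMap.adjoint T ξ⟫
            - ⟪x₀, ContinuousLinearMap.adjoint T ξ⟫ + ⟪c, ξ⟫ := by
        intro j
        rw [inner_add_left, map_sub, inner_sub_left,
          ContinuousLinearMap.adjoint_inner_right, ContinuousLinearMap.adjoint_inner_right]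
      have hfin : ⟪m, ContinuousLinearMap.adjoint T ξ⟫
          - ⟪x₀, ContinuousLinearMap.adjoint T ξ⟫ + ⟪c, ξ⟫ = ‖ξ‖ ^ 2 := by
        rw [← inner_sub_left, ContinuousLinearMap.adjoint_inner_right, ← inner_add_left,
          real_inner_self_eq_norm_sq]
      have := ((hweak (ContinuousLinearMap.adjoint T ξ)).sub_const
        ⟪x₀, ContinuousLinearMap.adjoint T ξ⟫).add_const ⟪c, ξ⟫
      rw [hfin] at this
      exact this.congr fun j => (hin j).symm
    have hub : ∀ j, ⟪T (v (φ j) - x₀) + c, ξ⟫ ≤ (I + 1 / ((φ j : ℝ) + 1)) * ‖ξ‖ := by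
      intro j
      calc ⟪T (v (φ j) - x₀) + c, ξ⟫ ≤ ‖T (v (φ j) - x₀) + c‖ * ‖ξ‖ := real_inner_le_norm _ _
        _ ≤ (I + 1 / ((φ j : ℝ) + 1)) * ‖ξ‖ := by
            apply mul_le_mul_of_nonneg_right _ (norm_nonneg _)
            exact le_of_lt (hvlt (φ j))
    have h3 : ‖ξ‖ ^ 2 ≤ I * ‖ξ‖ :=
      le_of_tendsto_of_tendsto' hlim (hQφ.mul_const ‖ξ‖) hub
    show ‖ξ‖ ≤ I
    rcases eq_or_lt_of_le (norm_nonneg ξ) with h0 | h0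
    · rw [← h0]; exact hInn
    · nlinarith
  refine ⟨m, hmball, fun w hw => ?_⟩
  exact hQm.trans (csInf_le hbdd ⟨w, hw, rfl⟩)


set_option maxHeartbeats 4000000 in
theorem residual_bound
    (x₀ : X) (ρ : ℝ) (hρ : 0 < ρ)
    (F : X → Y) (F' : X → X →L[ℝ] Y)
    (hF : ∀ u ∈ closedBall x₀ (6 * ρ), HasFDerivAt F (F' u) u)
    (ωb : ℝ) (hωb : ∀ u ∈ closedBall x₀ (6 * ρ), ‖F' u‖ ≤ ωb)
    (y : Y) (xstar : X) (hxstar : xstar ∈ closedBall x₀ ρ) (hFxstar : F xstar = y)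
    (L : ℝ) (hL : 0 < L)
    (hconvδ : ∀ δ : ℝ, 0 ≤ δ → ∀ yδ : Y, ‖y - yδ‖ ≤ δ →
      ConvexOn ℝ (closedBall x₀ (6 * ρ)) (fun u => (1 / 2) * ‖F u - yδ‖ ^ 2))
    (hLipδ : ∀ δ : ℝ, 0 ≤ δ → ∀ yδ : Y, ‖y - yδ‖ ≤ δ →
      ∀ u ∈ closedBall x₀ (6 * ρ), ∀ v ∈ closedBall x₀ (6 * ρ),
        ‖(ContinuousLinearMap.adjoint (F' u)) (F u - yδ) -
          (ContinuousLinearMap.adjoint (F' v)) (F v - yδ)‖ ≤ L * ‖u - v‖)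
    (α ω : ℝ) (hα : 3 < α) (hω : 0 < ω) (hωL : ω < 1 / L)
    (P : X → X)
    (hP_mem : ∀ u, P u ∈ closedBall x₀ (2 * ρ))
    (hP_proj : ∀ u, ∀ v ∈ closedBall x₀ (2 * ρ), ‖u - P u‖ ≤ ‖u - v‖)
    (δ : ℝ) (hδ : 0 ≤ δ) (yδ : Y) (hyδ : ‖y - yδ‖ ≤ δ)
    (x z : ℕ → X) (hx0 : x 0 = x₀)
    (hzdef : ∀ k : ℕ, z k = x k + (((k : ℝ) - 1) / ((k : ℝ) + α - 1)) • (x k - x (k - 1)))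
    (hxdef : ∀ k : ℕ, x (k + 1)
      = P (z k + ω • (ContinuousLinearMap.adjoint (F' (z k))) (yδ - F (z k)))) :
    ∀ K : ℕ, ‖F (x K) - yδ‖
      ≤ δ + Real.sqrt ((ω * (ωb * ρ + δ) ^ 2 + 4 * ρ ^ 2) / ω) * (α - 1) / ((K : ℝ) + α - 2) := by
  have hα1 : (0:ℝ) < α - 1 := by linarith
  have hα2 : (0:ℝ) < α - 2 := by linarith
  have h26 : closedBall x₀ (2*ρ) ⊆ closedBall x₀ (6*ρ) :=
    closedBall_subset_closedBall (by linarith)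
  have hx06 : x₀ ∈ closedBall x₀ (6*ρ) := mem_closedBall_self (by linarith)
  have hxstar2 : xstar ∈ closedBall x₀ (2*ρ) :=
    closedBall_subset_closedBall (by linarith) hxstar
  have hωb0 : 0 ≤ ωb := le_trans (norm_nonneg _) (hωb x₀ hx06)
  -- the objective and its gradient
  set Φ : X → ℝ := fun u => (1 / 2 : ℝ) * ‖F u - yδ‖ ^ 2 with hΦdef
  set G : X → X := fun u => (ContinuousLinearMap.adjoint (F' u)) (F u - yδ) with hGdef
  have hG : ∀ u ∈ closedBall x₀ (6*ρ), HasFDerivAt Φ (innerSL ℝ (G u)) u := fun u hu =>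
    hasGradient_phi F F' yδ _ hF hu
  have hGLip : ∀ u ∈ closedBall x₀ (6*ρ), ∀ v ∈ closedBall x₀ (6*ρ),
      ‖G u - G v‖ ≤ L * ‖u - v‖ := hLipδ δ hδ yδ hyδ
  have hΦconv : ConvexOn ℝ (closedBall x₀ (6*ρ)) Φ := hconvδ δ hδ yδ hyδ
  have hΦnn : ∀ u, 0 ≤ Φ u := fun u => by rw [hΦdef]; positivity
  -- F is affine on the big ball
  set T : X →L[ℝ] Y := F' x₀ with hT
  have hTconst : ∀ u ∈ closedBall x₀ (6*ρ), F' u = T := fun u hu =>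
    deriv_const_of_lip F F' y L _ hLipδ hu hx06
  have haff : ∀ u ∈ closedBall x₀ (6*ρ), F u - yδ = T (u - x₀) + (F x₀ - yδ) := by
    intro u hu
    have := affine_of_deriv_const F F' _ (convex_closedBall _ _) hF T hTconst hx06 hu
    rw [← this]; abel
  -- minimizer of Φ over the small ball
  obtain ⟨m, hm2, hmmin⟩ := exists_min_ball T (F x₀ - yδ) x₀ (2*ρ) (by linarith)
  have hmin : ∀ v ∈ closedBall x₀ (2*ρ), Φ m ≤ Φ v := by
    intro v hv
    rw [hΦdef]
    simp only
    rw [haff m (h26 hm2), haff v (h26 hv)]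
    have h1 := hmmin v hv
    nlinarith [norm_nonneg (T (m - x₀) + (F x₀ - yδ)), norm_nonneg (T (v - x₀) + (F x₀ - yδ))]
  -- the iterates stay in the small ball
  have hxmem : ∀ k, x k ∈ closedBall x₀ (2*ρ) := by
    intro k
    cases k with
    | zero => rw [hx0]; exact mem_closedBall_self (by linarith)
    | succ n => rw [hxdef n]; exact hP_mem _
  -- z k in the big ball
  have hz6 : ∀ k, z k ∈ closedBall x₀ (6*ρ) := by
    intro k
    rw [mem_closedBall_iff_norm, hzdef k]
    have hden : (0:ℝ) < (k:ℝ) + α - 1 := by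
      have h00 : (0:ℝ) ≤ (k:ℝ) := Nat.cast_nonneg k
      linarith
    have hβabs : |((k : ℝ) - 1) / ((k : ℝ) + α - 1)| ≤ 1 := by
      rw [abs_div, abs_of_pos hden, div_le_one hden]
      have h0 : (0:ℝ) ≤ (k:ℝ) := Nat.cast_nonneg k
      exact abs_le.mpr ⟨by linarith, by linarith⟩
    have h1 : ‖x k - x₀‖ ≤ 2*ρ := mem_closedBall_iff_norm.mp (hxmem k)
    have h2 : ‖x (k-1) - x₀‖ ≤ 2*ρ := mem_closedBall_iff_norm.mp (hxmem (k-1))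
    have h3 : ‖x k - x (k-1)‖ ≤ 4*ρ := by
      calc ‖x k - x (k-1)‖ = ‖(x k - x₀) - (x (k-1) - x₀)‖ := by congr 1; abel
        _ ≤ ‖x k - x₀‖ + ‖x (k-1) - x₀‖ := norm_sub_le _ _
        _ ≤ 4*ρ := by linarith
    calc ‖x k + (((k : ℝ) - 1) / ((k : ℝ) + α - 1)) • (x k - x (k - 1)) - x₀‖
        = ‖(x k - x₀) + (((k : ℝ) - 1) / ((k : ℝ) + α - 1)) • (x k - x (k - 1))‖ := by
          congr 1; abel
      _ ≤ ‖x k - x₀‖ + ‖(((k : ℝ) - 1) / ((k : ℝ) + α - 1)) • (x k - x (k - 1))‖ :=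
          norm_add_le _ _
      _ = ‖x k - x₀‖ + |((k : ℝ) - 1) / ((k : ℝ) + α - 1)| * ‖x k - x (k - 1)‖ := by
          rw [norm_smul, Real.norm_eq_abs]
      _ ≤ 2*ρ + 1 * (4*ρ) := by
          have := mul_le_mul hβabs h3 (norm_nonneg _) zero_le_one
          linarith
      _ ≤ 6*ρ := by linarith
  -- recursion in prox form
  have hxP : ∀ k, x (k + 1) = P (z k - ω • G (z k)) := by
    intro k
    rw [hxdef k]
    congr 1
    have : (ContinuousLinearMap.adjoint (F' (z k))) (yδ - F (z k)) = -G (z k) := by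
      rw [hGdef]
      simp only
      rw [show yδ - F (z k) = -(F (z k) - yδ) by abel, map_neg]
    rw [this, smul_neg]
    abel
  -- the auxiliary sequences
  set t : ℕ → ℝ := fun k => ((k:ℝ) + α - 2) / (α - 1) with htdef
  have htpos : ∀ k, 0 < t k := by
    intro k
    have h0 : (0:ℝ) ≤ (k:ℝ) := Nat.cast_nonneg k
    exact div_pos (by linarith) hα1
  have ht1 : ∀ k, 1 ≤ t (k+1) := by
    intro k
    rw [htdef]
    simp only
    rw [le_div_iff₀ hα1]
    push_cast
    have h0 : (0:ℝ) ≤ (k:ℝ) := Nat.cast_nonneg k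
    linarith
  have htsq : ∀ k, (t (k+1))^2 - t (k+1) ≤ (t k)^2 := by
    intro k
    have h0 : (0:ℝ) ≤ (k:ℝ) := Nat.cast_nonneg k
    have key : ((k:ℝ)+α-1)^2 - ((k:ℝ)+α-1)*(α-1) ≤ ((k:ℝ)+α-2)^2 := by
      nlinarith [mul_nonneg (by linarith : (0:ℝ) ≤ (k:ℝ)+α-1) (by linarith : (0:ℝ) ≤ α - 3)]
    have e1 : (t (k+1))^2 - t (k+1)
        = (((k:ℝ)+α-1)^2 - ((k:ℝ)+α-1)*(α-1))/(α-1)^2 := by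
      rw [htdef]
      simp only
      push_cast
      field_simp
      ring
    have e2 : (t k)^2 = ((k:ℝ)+α-2)^2/(α-1)^2 := by
      rw [htdef]
      simp only
      rw [div_pow]
    rw [e1, e2]
    gcongr
  have hβt : ∀ k : ℕ, ((k : ℝ) - 1) / ((k : ℝ) + α - 1) = (t k - 1) / (t (k+1)) := by
    intro k
    have h0 : (0:ℝ) ≤ (k:ℝ) := Nat.cast_nonneg k
    have hden : (0:ℝ) < (k:ℝ) + α - 1 := by linarith
    rw [htdef]
    simp only
    push_cast
    rw [div_eq_div_iff hden.ne' (ne_of_gt (div_pos (by linarith) hα1))]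
    field_simp
    ring
  set w : ℕ → X := fun k => t k • x k - (t k - 1) • x (k - 1) - m with hwdef
  set E : ℕ → ℝ := fun k => 2*ω*(t k)^2*(Φ (x k) - Φ m) + ‖w k‖^2 with hEdef
  -- one-step decay of the energy
  have hstep : ∀ k, E (k+1) ≤ E k := by
    intro k
    set Tp : ℝ := t (k+1) with hTp
    have hTp1 : 1 ≤ Tp := ht1 k
    have hTppos : 0 < Tp := lt_of_lt_of_le one_pos hTp1
    have h1T : 1/Tp ≤ 1 := by rw [div_le_one hTppos]; exact hTp1
    have h1Tnn : 0 ≤ 1/Tp := by positivity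
    have hvmem : x k + (1/Tp) • (m - x k) ∈ closedBall x₀ (2*ρ) := by
      apply (convex_closedBall x₀ (2*ρ)).add_smul_sub_mem (hxmem k) hm2
      constructor
      · positivity
      · rw [div_le_one hTppos]; exact hTp1
    set v : X := x k + (1/Tp) • (m - x k) with hvdef
    have hkey := key_step (convex_closedBall x₀ (6*ρ)) (convex_closedBall x₀ (2*ρ)) h26
      hω (le_of_lt ((lt_div_iff₀ hL).mp hωL)) hΦconv hG hGLip hP_mem hP_proj
      (hz6 k) hvmem
    rw [← hxP k] at hkey
    -- vector identities
    have hc1 : Tp * ((t k - 1)/Tp) = t k - 1 := by field_simp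
    have hc2 : Tp * (1/Tp) = 1 := by field_simp
    have hzk := hzdef k
    rw [hβt k, ← hTp] at hzk
    have hzv : Tp • (z k - v) = w k := by
      rw [hzk, hvdef]
      have hsimp : (x k + ((t k - 1)/Tp) • (x k - x (k-1))) - (x k + (1/Tp) • (m - x k))
          = ((t k - 1)/Tp) • (x k - x (k-1)) - (1/Tp) • (m - x k) := by abel
      rw [hsimp, smul_sub, smul_smul, smul_smul, hc1, hc2, one_smul, hwdef]
      module
    have hxv : Tp • (x (k+1) - v) = w (k+1) := by
      rw [hvdef]
      have hsimp : x (k+1) - (x k + (1/Tp) • (m - x k))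
          = (x (k+1) - x k) - (1/Tp) • (m - x k) := by abel
      rw [hsimp, smul_sub, smul_smul, hc2, one_smul, hwdef]
      simp only [Nat.add_sub_cancel]
      rw [← hTp]
      module
    have hn1 : Tp^2 * ‖z k - v‖^2 = ‖w k‖^2 := by
      rw [← hzv, norm_smul, Real.norm_eq_abs, abs_of_pos hTppos, mul_pow]
    have hn2 : Tp^2 * ‖x (k+1) - v‖^2 = ‖w (k+1)‖^2 := by
      rw [← hxv, norm_smul, Real.norm_eq_abs, abs_of_pos hTppos, mul_pow]
    -- convexity at v
    have hΦv : Φ v ≤ (1 - 1/Tp) * Φ (x k) + (1/Tp) * Φ m := by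
      have hveq : v = (1 - 1/Tp) • x k + (1/Tp) • m := by rw [hvdef]; module
      rw [hveq]
      have hcc := hΦconv.2 (h26 (hxmem k)) (h26 hm2)
        (by linarith : (0:ℝ) ≤ 1 - 1/Tp) h1Tnn (by ring)
      simpa [smul_eq_mul] using hcc
    -- numeric assembly
    have c1 := mul_le_mul_of_nonneg_left hkey (sq_nonneg Tp)
    have c1' : Tp^2 * (2*ω*(Φ (x (k+1)) - Φ v)) ≤ ‖w k‖^2 - ‖w (k+1)‖^2 := by
      calc Tp^2 * (2*ω*(Φ (x (k+1)) - Φ v))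
          ≤ Tp^2 * (‖z k - v‖^2 - ‖x (k+1) - v‖^2) := c1
        _ = Tp^2 * ‖z k - v‖^2 - Tp^2 * ‖x (k+1) - v‖^2 := by ring
        _ = ‖w k‖^2 - ‖w (k+1)‖^2 := by rw [hn1, hn2]
    have hmm := mul_le_mul_of_nonneg_left hΦv (by positivity : (0:ℝ) ≤ 2*ω*Tp^2)
    have e1 : 2*ω*Tp^2*((1 - 1/Tp)*Φ (x k) + (1/Tp)*Φ m)
        = 2*ω*((Tp^2 - Tp)*Φ (x k) + Tp*Φ m) := by
      field_simp
    rw [e1] at hmm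
    have hbnn : 0 ≤ Φ (x k) - Φ m := sub_nonneg.mpr (hmin _ (hxmem k))
    have c3 : 2*ω*(Tp^2 - Tp)*(Φ (x k) - Φ m) ≤ 2*ω*(t k)^2*(Φ (x k) - Φ m) := by
      have h4 := mul_le_mul_of_nonneg_right (htsq k) hbnn
      rw [← hTp] at h4
      nlinarith [h4]
    show 2*ω*(t (k+1))^2*(Φ (x (k+1)) - Φ m) + ‖w (k+1)‖^2
        ≤ 2*ω*(t k)^2*(Φ (x k) - Φ m) + ‖w k‖^2
    rw [← hTp]
    nlinarith [c1', hmm, c3]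
  -- energy bounded by its initial value
  have hEK : ∀ K, E K ≤ E 0 := by
    intro K
    induction K with
    | zero => exact le_refl _
    | succ n ih => exact le_trans (hstep n) ih
  -- initial energy bound
  have hw0 : w 0 = x₀ - m := by
    rw [hwdef]
    simp only
    rw [show (0:ℕ) - 1 = 0 from rfl, hx0]
    module
  have hxm : ‖x₀ - m‖ ≤ 2*ρ := by
    rw [norm_sub_rev]
    exact mem_closedBall_iff_norm.mp hm2
  have hFx0 : ‖F x₀ - yδ‖ ≤ ωb*ρ + δ := by
    have hmvt := (convex_closedBall x₀ (6*ρ)).norm_image_sub_le_of_norm_hasFDerivWithin_le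
      (fun u hu => (hF u hu).hasFDerivWithinAt) hωb (h26 (closedBall_subset_closedBall (by linarith) hxstar)) hx06
    have hxs : ‖x₀ - xstar‖ ≤ ρ := by
      rw [norm_sub_rev]
      exact mem_closedBall_iff_norm.mp hxstar
    have h1 : ‖F x₀ - F xstar‖ ≤ ωb * ρ :=
      le_trans hmvt (mul_le_mul_of_nonneg_left hxs hωb0)
    calc ‖F x₀ - yδ‖ = ‖(F x₀ - F xstar) + (F xstar - yδ)‖ := by congr 1; abel
      _ ≤ ‖F x₀ - F xstar‖ + ‖F xstar - yδ‖ := norm_add_le _ _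
      _ ≤ ωb * ρ + δ := by
          have : ‖F xstar - yδ‖ ≤ δ := by rw [hFxstar]; exact hyδ
          linarith
  have hΦx0 : Φ (x 0) ≤ (1/2)*(ωb*ρ + δ)^2 := by
    rw [hΦdef, hx0]
    simp only
    have := pow_le_pow_left₀ (norm_nonneg _) hFx0 2
    linarith
  have ht0le : t 0 ≤ 1 := by
    rw [htdef]
    simp only
    rw [div_le_one hα1]
    push_cast
    linarith
  have ht0sq : (t 0)^2 ≤ 1 := by
    nlinarith [htpos 0]
  have hs0nn : 0 ≤ Φ (x 0) - Φ m := sub_nonneg.mpr (hmin _ (hxmem 0))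
  set C0 : ℝ := ω*(ωb*ρ+δ)^2 + 4*ρ^2 with hC0def
  have hE0 : E 0 ≤ C0 := by
    rw [hEdef, hC0def]
    simp only
    rw [hw0, hx0]
    have hw0sq : ‖x₀ - m‖^2 ≤ 4*ρ^2 := by nlinarith [norm_nonneg (x₀ - m)]
    have hΦx0' : Φ x₀ ≤ (1/2)*(ωb*ρ + δ)^2 := by rw [← hx0]; exact hΦx0
    have hs0nn' : 0 ≤ Φ x₀ - Φ m := by rw [← hx0]; exact hs0nn
    have p1 : 2*ω*(t 0)^2*(Φ x₀ - Φ m) ≤ 2*ω*(Φ x₀ - Φ m) := by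
      nlinarith [mul_nonneg (mul_nonneg (by linarith : (0:ℝ) ≤ 2*ω) hs0nn')
        (by linarith : (0:ℝ) ≤ 1 - (t 0)^2)]
    have p2 : 2*ω*(Φ x₀ - Φ m) ≤ ω*(ωb*ρ+δ)^2 := by
      have hΦm : 0 ≤ Φ m := hΦnn m
      nlinarith
    linarith
  -- conclusion
  intro K
  have hKαpos : (0:ℝ) < (K:ℝ) + α - 2 := by
    have : (0:ℝ) ≤ (K:ℝ) := Nat.cast_nonneg K
    linarith
  have htKpos : 0 < t K := htpos K
  have hsKnn : 0 ≤ Φ (x K) - Φ m := sub_nonneg.mpr (hmin _ (hxmem K))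
  have hEKb : 2*ω*(t K)^2*(Φ (x K) - Φ m) ≤ C0 := by
    have h1 := hEK K
    have h2 : 0 ≤ ‖w K‖^2 := sq_nonneg _
    have h3 : E K = 2*ω*(t K)^2*(Φ (x K) - Φ m) + ‖w K‖^2 := by rw [hEdef]
    rw [h3] at h1
    linarith [hE0]
  have hC0nn : 0 ≤ C0 := by
    rw [hC0def]
    nlinarith [sq_nonneg (ωb*ρ+δ), sq_nonneg ρ]
  have hΦm2 : Φ m ≤ δ^2/2 := by
    have h1 : Φ m ≤ Φ xstar := hmin xstar hxstar2
    have h2 : Φ xstar = (1/2)*‖y - yδ‖^2 := by rw [hΦdef]; simp only; rw [hFxstar]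
    have h3 := pow_le_pow_left₀ (norm_nonneg (y - yδ)) hyδ 2
    rw [h2] at h1
    nlinarith
  -- residual squared bound
  have hres2 : ‖F (x K) - yδ‖^2 ≤ δ^2 + C0/(ω*(t K)^2) := by
    have hΦK : Φ (x K) = (1/2)*‖F (x K) - yδ‖^2 := by rw [hΦdef]
    have hsK : Φ (x K) - Φ m ≤ C0/(2*ω*(t K)^2) := by
      rw [le_div_iff₀ (by positivity)]
      nlinarith [hEKb]
    have heq : 2*(C0/(2*ω*(t K)^2)) = C0/(ω*(t K)^2) := by
      field_simp
    nlinarith [hsK, hΦm2]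
  set D : ℝ := Real.sqrt (C0/ω) with hDdef
  have hDnn : 0 ≤ D := Real.sqrt_nonneg _
  have hD2 : D^2 = C0/ω := Real.sq_sqrt (div_nonneg hC0nn hω.le)
  have htKform : D / t K = D * (α-1) / ((K:ℝ) + α - 2) := by
    rw [htdef]
    simp only
    rw [div_div_eq_mul_div]
  have hrhsnn : 0 ≤ δ + D / t K := by positivity
  have hsq : ‖F (x K) - yδ‖^2 ≤ (δ + D / t K)^2 := by
    have hcross : 0 ≤ 2*δ*(D/t K) := by positivity
    have hDt : (D/t K)^2 = C0/(ω*(t K)^2) := by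
      rw [div_pow, hD2, div_div]
    nlinarith [hres2]
  have hfin : ‖F (x K) - yδ‖ ≤ δ + D / t K := by
    calc ‖F (x K) - yδ‖ = Real.sqrt (‖F (x K) - yδ‖^2) := (Real.sqrt_sq (norm_nonneg _)).symm
      _ ≤ Real.sqrt ((δ + D / t K)^2) := Real.sqrt_le_sqrt hsq
      _ = δ + D / t K := Real.sqrt_sq hrhsnn
  rw [htKform] at hfin
  exact hfin

end AuxMain

set_option maxHeartbeats 1000000 in
/-- Under uniform convexity of all `Φ^δ`, with the discrepancy principle
`‖F(x_{k*}^δ) − y^δ‖ ≤ τδ`: (i) the stopping index `k*` is finite for every `δ > 0` and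
`k* = O(δ⁻¹)` as `δ → 0`; (ii) along any sequence `δ_n → 0` a subsequence of the stopped
iterates converges weakly to some `x̃ ∈ S`; (iii) if `S` is a singleton, the whole sequence
of stopped iterates converges weakly to `x̃`. -/
theorem nesterov_regularization_discrepancy
    {X Y : Type*} [NormedAddCommGroup X] [InnerProductSpace ℝ X] [CompleteSpace X]
    [NormedAddCommGroup Y] [InnerProductSpace ℝ Y] [CompleteSpace Y]
    (x₀ : X) (ρ : ℝ) (hρ : 0 < ρ)
    (F : X → Y) (F' : X → X →L[ℝ] Y)
    (hF : ∀ u ∈ closedBall x₀ (6 * ρ), HasFDerivAt F (F' u) u)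
    (ωb : ℝ) (hωb : ∀ u ∈ closedBall x₀ (6 * ρ), ‖F' u‖ ≤ ωb)
    -- weak sequential closedness of `F` on `B_{2ρ}(x₀)`
    (hwsc : ∀ (u : ℕ → X) (u' : X) (v : Y),
      (∀ n, u n ∈ closedBall x₀ (2 * ρ)) →
      (∀ h : X, Tendsto (fun n => ⟪u n, h⟫) atTop (nhds ⟪u', h⟫)) →
      Tendsto (fun n => F (u n)) atTop (nhds v) →
      u' ∈ closedBall x₀ (2 * ρ) ∧ F u' = v)
    (y : Y) (xstar : X) (hxstar : xstar ∈ closedBall x₀ ρ) (hFxstar : F xstar = y)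
    (L : ℝ) (hL : 0 < L)
    -- convexity and uniform Lipschitz continuity of the gradients of all the `Φ^δ`
    (hconvδ : ∀ δ : ℝ, 0 ≤ δ → ∀ yδ : Y, ‖y - yδ‖ ≤ δ →
      ConvexOn ℝ (closedBall x₀ (6 * ρ)) (fun u => (1 / 2) * ‖F u - yδ‖ ^ 2))
    (hLipδ : ∀ δ : ℝ, 0 ≤ δ → ∀ yδ : Y, ‖y - yδ‖ ≤ δ →
      ∀ u ∈ closedBall x₀ (6 * ρ), ∀ v ∈ closedBall x₀ (6 * ρ),
        ‖(ContinuousLinearMap.adjoint (F' u)) (F u - yδ) -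
          (ContinuousLinearMap.adjoint (F' v)) (F v - yδ)‖ ≤ L * ‖u - v‖)
    (α ω : ℝ) (hα : 3 < α) (hω : 0 < ω) (hωL : ω < 1 / L)
    (P : X → X)
    (hP_mem : ∀ u, P u ∈ closedBall x₀ (2 * ρ))
    (hP_proj : ∀ u, ∀ v ∈ closedBall x₀ (2 * ρ), ‖u - P u‖ ≤ ‖u - v‖)
    (τ : ℝ) (hτ : 1 < τ) :
    -- (i) finiteness of the discrepancy stopping index for every `δ > 0`
    (∀ δ : ℝ, 0 < δ → ∀ yδ : Y, ‖y - yδ‖ ≤ δ → ∀ x z : ℕ → X, x 0 = x₀ →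
      (∀ k : ℕ, z k = x k + (((k : ℝ) - 1) / ((k : ℝ) + α - 1)) • (x k - x (k - 1))) →
      (∀ k : ℕ, x (k + 1)
        = P (z k + ω • (ContinuousLinearMap.adjoint (F' (z k))) (yδ - F (z k)))) →
      ∃ ks : ℕ, ‖F (x ks) - yδ‖ ≤ τ * δ ∧ ∀ k : ℕ, k < ks → ¬ (‖F (x k) - yδ‖ ≤ τ * δ)) ∧
    -- (i) the rate `k* = O(δ⁻¹)` as `δ → 0`
    (∃ C : ℝ, 0 < C ∧ ∃ δ₀ : ℝ, 0 < δ₀ ∧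
      ∀ δ : ℝ, 0 < δ → δ ≤ δ₀ → ∀ yδ : Y, ‖y - yδ‖ ≤ δ → ∀ x z : ℕ → X, x 0 = x₀ →
      (∀ k : ℕ, z k = x k + (((k : ℝ) - 1) / ((k : ℝ) + α - 1)) • (x k - x (k - 1))) →
      (∀ k : ℕ, x (k + 1)
        = P (z k + ω • (ContinuousLinearMap.adjoint (F' (z k))) (yδ - F (z k)))) →
      ∀ ks : ℕ, ‖F (x ks) - yδ‖ ≤ τ * δ →
        (∀ k : ℕ, k < ks → ¬ (‖F (x k) - yδ‖ ≤ τ * δ)) →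
        (ks : ℝ) ≤ C / δ) ∧
    -- (ii) and (iii): weak convergence of the stopped iterates along `δ_n → 0`
    (∀ δn : ℕ → ℝ, (∀ n, 0 < δn n) → Tendsto δn atTop (nhds 0) →
      ∀ yn : ℕ → Y, (∀ n, ‖y - yn n‖ ≤ δn n) →
      ∀ x z : ℕ → ℕ → X, (∀ n, x n 0 = x₀) →
      (∀ n k, z n k = x n k + (((k : ℝ) - 1) / ((k : ℝ) + α - 1)) • (x n k - x n (k - 1))) →
      (∀ n k, x n (k + 1)
        = P (z n k + ω • (ContinuousLinearMap.adjoint (F' (z n k))) (yn n - F (z n k)))) →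
      ∀ ks : ℕ → ℕ,
      (∀ n, ‖F (x n (ks n)) - yn n‖ ≤ τ * δn n) →
      (∀ n, ∀ k : ℕ, k < ks n → ¬ (‖F (x n k) - yn n‖ ≤ τ * δn n)) →
      (∃ xt ∈ {u : X | u ∈ closedBall x₀ (2 * ρ) ∧ F u = y},
        ∃ φ : ℕ → ℕ, StrictMono φ ∧
          ∀ h : X, Tendsto (fun m => ⟪x (φ m) (ks (φ m)), h⟫) atTop (nhds ⟪xt, h⟫)) ∧
      (∀ xt : X, {u : X | u ∈ closedBall x₀ (2 * ρ) ∧ F u = y} = {xt} →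
        ∀ h : X, Tendsto (fun n => ⟪x n (ks n), h⟫) atTop (nhds ⟪xt, h⟫))) := by
  classical
  have hτ1 : (0:ℝ) < τ - 1 := by linarith
  have hα2 : (0:ℝ) < α - 2 := by linarith
  have hα1 : (0:ℝ) < α - 1 := by linarith
  -- a reusable "there exists a good index" fact
  have hgood : ∀ δ : ℝ, 0 < δ → ∀ yδ : Y, ‖y - yδ‖ ≤ δ → ∀ x z : ℕ → X, x 0 = x₀ →
      (∀ k : ℕ, z k = x k + (((k : ℝ) - 1) / ((k : ℝ) + α - 1)) • (x k - x (k - 1))) →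
      (∀ k : ℕ, x (k + 1)
        = P (z k + ω • (ContinuousLinearMap.adjoint (F' (z k))) (yδ - F (z k)))) →
      ∀ D : ℝ, Real.sqrt ((ω * (ωb * ρ + δ) ^ 2 + 4 * ρ ^ 2) / ω) ≤ D →
      ∀ K : ℕ, D * (α - 1) / ((τ - 1) * δ) ≤ (K : ℝ) →
      ‖F (x K) - yδ‖ ≤ τ * δ := by
    intro δ hδ yδ hyδ x z hx0 hzdef hxdef D hD K hK
    have hrb := residual_bound x₀ ρ hρ F F' hF ωb hωb y xstar hxstar hFxstar L hL
      hconvδ hLipδ α ω hα hω hωL P hP_mem hP_proj δ hδ.le yδ hyδ x z hx0 hzdef hxdef K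
    have hKα : (0:ℝ) < (K:ℝ) + α - 2 := by
      have : (0:ℝ) ≤ (K:ℝ) := Nat.cast_nonneg K
      linarith
    have hDnn : 0 ≤ D := le_trans (Real.sqrt_nonneg _) hD
    have hstep : Real.sqrt ((ω * (ωb * ρ + δ) ^ 2 + 4 * ρ ^ 2) / ω) * (α - 1) / ((K : ℝ) + α - 2)
        ≤ (τ - 1) * δ := by
      have h1 : Real.sqrt ((ω * (ωb * ρ + δ) ^ 2 + 4 * ρ ^ 2) / ω) * (α - 1) / ((K : ℝ) + α - 2)
          ≤ D * (α - 1) / ((K : ℝ) + α - 2) := by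
        gcongr
      refine h1.trans ?_
      rw [div_le_iff₀ hKα]
      have h2 : D * (α - 1) ≤ (τ - 1) * δ * (K:ℝ) := by
        rw [div_le_iff₀ (by positivity)] at hK
        linarith [hK]
      nlinarith [mul_nonneg (mul_nonneg hτ1.le hδ.le) hα2.le]
    calc ‖F (x K) - yδ‖ ≤ δ + Real.sqrt ((ω * (ωb * ρ + δ) ^ 2 + 4 * ρ ^ 2) / ω) * (α - 1)
          / ((K : ℝ) + α - 2) := hrb
      _ ≤ δ + (τ - 1) * δ := by linarith
      _ = τ * δ := by ring
  refine ⟨?_, ?_, ?_⟩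
  · -- (i) existence of the stopping index
    intro δ hδ yδ hyδ x z hx0 hzdef hxdef
    set D : ℝ := Real.sqrt ((ω * (ωb * ρ + δ) ^ 2 + 4 * ρ ^ 2) / ω) with hD
    set K : ℕ := ⌈D * (α - 1) / ((τ - 1) * δ)⌉₊ with hK
    have hgoodK : ‖F (x K) - yδ‖ ≤ τ * δ :=
      hgood δ hδ yδ hyδ x z hx0 hzdef hxdef D le_rfl K (Nat.le_ceil _)
    have hex : ∃ k : ℕ, ‖F (x k) - yδ‖ ≤ τ * δ := ⟨K, hgoodK⟩
    exact ⟨Nat.find hex, Nat.find_spec hex, fun k hk => Nat.find_min hex hk⟩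
  · -- (i) the O(1/δ) rate
    set D0 : ℝ := Real.sqrt ((ω * (ωb * ρ + ρ) ^ 2 + 4 * ρ ^ 2) / ω) with hD0
    refine ⟨D0 * (α - 1) / (τ - 1) + ρ + 1, by positivity, ρ, hρ, ?_⟩
    intro δ hδ hδρ yδ hyδ x z hx0 hzdef hxdef ks hks hksmin
    set K : ℕ := ⌈D0 * (α - 1) / ((τ - 1) * δ)⌉₊ with hK
    have hDle : Real.sqrt ((ω * (ωb * ρ + δ) ^ 2 + 4 * ρ ^ 2) / ω) ≤ D0 := by
      apply Real.sqrt_le_sqrt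
      have hωb0 : 0 ≤ ωb :=
        le_trans (norm_nonneg _) (hωb x₀ (mem_closedBall_self (by linarith)))
      gcongr
    have hgoodK : ‖F (x K) - yδ‖ ≤ τ * δ :=
      hgood δ hδ yδ hyδ x z hx0 hzdef hxdef D0 hDle K (Nat.le_ceil _)
    have hksK : ks ≤ K := by
      by_contra hlt
      push_neg at hlt
      exact hksmin K hlt hgoodK
    have hceil : (K : ℝ) < D0 * (α - 1) / ((τ - 1) * δ) + 1 :=
      Nat.ceil_lt_add_one (by positivity)
    have hksR : (ks : ℝ) ≤ (K : ℝ) := Nat.cast_le.mpr hksK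
    have hfin : D0 * (α - 1) / ((τ - 1) * δ) + 1 ≤ (D0 * (α - 1) / (τ - 1) + ρ + 1) / δ := by
      have e2 : (D0 * (α - 1) / ((τ - 1) * δ) + 1) * δ = D0 * (α - 1) / (τ - 1) + δ := by
        field_simp
      rw [le_div_iff₀ hδ, e2]
      have hD0nn : 0 ≤ D0 := Real.sqrt_nonneg _
      linarith
    linarith
  · -- (ii) and (iii)
    intro δn hδn hδn0 yn hyn x z hx0 hzdef hxdef ks hks hksmin
    have hxmem : ∀ n k, x n k ∈ closedBall x₀ (2 * ρ) := by
      intro n k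
      cases k with
      | zero => rw [hx0 n]; exact mem_closedBall_self (by linarith)
      | succ j => rw [hxdef n j]; exact hP_mem _
    set u : ℕ → X := fun n => x n (ks n) with hu
    have humem : ∀ n, u n ∈ closedBall x₀ (2 * ρ) := fun n => hxmem n (ks n)
    have hubd : ∀ n, ‖u n‖ ≤ ‖x₀‖ + 2 * ρ := by
      intro n
      have := mem_closedBall_iff_norm.mp (humem n)
      calc ‖u n‖ = ‖x₀ + (u n - x₀)‖ := by rw [add_sub_cancel]
        _ ≤ ‖x₀‖ + ‖u n - x₀‖ := norm_add_le _ _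
        _ ≤ ‖x₀‖ + 2 * ρ := by linarith
    have hFu : Tendsto (fun n => F (u n)) atTop (𝓝 y) := by
      rw [tendsto_iff_norm_sub_tendsto_zero]
      apply squeeze_zero (fun n => norm_nonneg _) (g := fun n => (τ + 1) * δn n)
      · intro n
        calc ‖F (u n) - y‖ = ‖(F (u n) - yn n) + (yn n - y)‖ := by congr 1; abel
          _ ≤ ‖F (u n) - yn n‖ + ‖yn n - y‖ := norm_add_le _ _
          _ ≤ τ * δn n + δn n := by
              have h1 := hks n
              have h2 : ‖yn n - y‖ ≤ δn n := by rw [norm_sub_rev]; exact hyn n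
              exact add_le_add h1 h2
          _ = (τ + 1) * δn n := by ring
      · have := hδn0.const_mul (τ + 1)
        simpa using this
    constructor
    · obtain ⟨w, φ, hφ, hweak⟩ := exists_weak_subseq u (‖x₀‖ + 2 * ρ) hubd
      have hF2 : Tendsto (fun m => F (u (φ m))) atTop (𝓝 y) :=
        hFu.comp hφ.tendsto_atTop
      have hw := hwsc (fun m => u (φ m)) w y (fun m => humem (φ m)) hweak hF2
      exact ⟨w, ⟨hw.1, hw.2⟩, φ, hφ, hweak⟩
    · intro xt hxt h
      apply tendsto_of_subseq_tendsto
      intro ns hns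
      obtain ⟨w, φ, hφ, hweak⟩ := exists_weak_subseq (fun j => u (ns j)) (‖x₀‖ + 2 * ρ)
        (fun j => hubd (ns j))
      have hF2 : Tendsto (fun m => F (u (ns (φ m)))) atTop (𝓝 y) :=
        hFu.comp (hns.comp hφ.tendsto_atTop)
      have hw := hwsc (fun m => u (ns (φ m))) w y (fun m => humem (ns (φ m)))
        (fun h' => hweak h') hF2
      have hwxt : w = xt := by
        have : w ∈ {u : X | u ∈ closedBall x₀ (2 * ρ) ∧ F u = y} := ⟨hw.1, hw.2⟩
        rw [hxt] at this
        exact this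
      exact ⟨φ, by rw [← hwxt]; exact hweak h⟩
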